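/- Let λ be a weakly decreasing tuple of nonnegative integers of length n, α = λ + ρ_n, and let β ∈ Ω(α). Then every entry of the tuple β − ρ_n is a nonnegative integer, and P_{β−ρ_n}(x;t) = t^{l(β)} · P_λ(x;t) in F. -/

import Mathlib

open MvPolynomial Finset

noncomputable section

abbrev Rr : Type := MvPolynomial (Fin 2 ⊕ ℕ) ℚ

abbrev F : Type := FractionRing Rr

/-- The variable `q`. -/
def q : F := algebraMap Rr F (X (Sum.inl 0))

/-- The variable `t`. -/
def t : F := algebraMap Rr F (X (Sum.inl 1))

/-- `x k` is the variable `x_{k+1}` of the paper (0-indexed). -/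
def x (k : ℕ) : F := algebraMap Rr F (X (Sum.inr k))

/-- Substitution endomorphism of `F` induced by an injective map of variables. -/
def subF (g : Fin 2 ⊕ ℕ → Fin 2 ⊕ ℕ) (hg : Function.Injective g) : F →+* F :=
  IsFractionRing.lift (g := (algebraMap Rr F).comp (rename g).toRingHom)
    (by
      rw [RingHom.coe_comp]
      exact (IsFractionRing.injective Rr F).comp (rename_injective g hg))

def permNat (n : ℕ) (σ : Equiv.Perm (Fin n)) : ℕ → ℕ :=
  fun k => if h : k < n then (σ ⟨k, h⟩ : ℕ) else k

lemma permNat_inj (n : ℕ) (σ : Equiv.Perm (Fin n)) : Function.Injective (permNat n σ) := by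
  intro a b hab
  unfold permNat at hab
  split_ifs at hab with h1 h2 h2
  · have := σ.injective (Fin.val_injective hab)
    exact congrArg Fin.val this
  · have := (σ ⟨a, h1⟩).isLt; omega
  · have := (σ ⟨b, h2⟩).isLt; omega
  · exact hab

/-- The action of a permutation `σ ∈ S_n` on `F`, permuting `x_1, …, x_n`. -/
def pact (n : ℕ) (σ : Equiv.Perm (Fin n)) : F →+* F :=
  subF (Sum.map id (permNat n σ)) (Function.injective_id.sumMap (permNat_inj n σ))

def shiftNat (i : ℕ) : ℕ → ℕ := fun k => if k < i then k else k + 1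

lemma shiftNat_inj (i : ℕ) : Function.Injective (shiftNat i) := by
  intro a b; unfold shiftNat; split_ifs <;> omega

/-- `zeta i` is the endomorphism `ζ_{i+1}` of the paper: it fixes `q`, `t` and
`x k` for `k < i`, and sends `x k` to `x (k+1)` for `k ≥ i` (0-indexed). -/
def zeta (i : ℕ) : F →+* F :=
  subF (Sum.map id (shiftNat i)) (Function.injective_id.sumMap (shiftNat_inj i))

/-- `zetaP i j` is `ζ_{i+1,j+1}` of the paper. -/
def zetaP (i j : ℕ) : F →+* F := (zeta (max i j)).comp (zeta (min i j))

/-- The Hall–Littlewood polynomial `P_λ(x; t)` in `n` variables. -/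
def HL (n : ℕ) (lam : Fin n → ℕ) : F :=
  ∑ σ : Equiv.Perm (Fin n), pact n σ
    ((∏ i : Fin n, x i.val ^ lam i) *
      ∏ i : Fin n, ∏ j ∈ Finset.Ioi i, (x i.val - t * x j.val) / (x i.val - x j.val))

/-- `ρ_n`, 0-indexed: `rho n i = n - 1 - i`. -/
def rho (n : ℕ) : Fin n → ℕ := fun i => n - 1 - i.val

/-- The deformed Weyl denominator `Δ_n(c) = ∏_{i<j} (x_i - c x_j)`. -/
def DeltaQ (n : ℕ) (c : F) : F := ∏ i : Fin n, ∏ j ∈ Finset.Ioi i, (x i.val - c * x j.val)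

/-- The Schur polynomial `s_λ(x) = Σ_σ σ(x^{λ+ρ}/Δ_n)`. -/
def Schur (n : ℕ) (lam : Fin n → ℕ) : F :=
  ∑ σ : Equiv.Perm (Fin n), pact n σ
    ((∏ i : Fin n, x i.val ^ (lam i + rho n i)) / DeltaQ n 1)

/-- `GT2 n α` is the set of tuples `μ` of length `n` with `α_{i+1} ≤ μ_i ≤ α_i`. -/
def GT2 (n : ℕ) (α : Fin (n+1) → ℕ) : Finset (Fin n → ℕ) :=
  Fintype.piFinset (fun i => Finset.Icc (α i.succ) (α i.castSucc))

def GLw (y a : ℕ) : F := if y = a then -q else if y + 1 = a then t else 0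

def GRw (y b : ℕ) : F := if y = b then 1 else if y = b + 1 then -q * t else 0

/-- `w(μ_j)` where `a1 = α_j`, `a2 = α_{j+1}`, `m = μ_j`. -/
def wgt (a1 a2 m : ℕ) : F :=
  (if m = a1 ∨ m = a2 then 0 else (1 - q) * (1 - t)) + GLw m a1 + GRw m a2

/-- The tridiagonal determinant `M(α; μ)`. -/
def Mdet (n : ℕ) (α : Fin (n+1) → ℕ) (μ : Fin n → ℕ) : F :=
  Matrix.det (Matrix.of fun i j : Fin n =>
    if i = j then wgt (α i.castSucc) (α i.succ) (μ i)
    else if (i : ℕ) + 1 = (j : ℕ) then 1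
    else if (j : ℕ) + 1 = (i : ℕ) then GRw (μ j) (α i.castSucc) * GLw (μ i) (α i.castSucc)
    else 0)

def tot {n : ℕ} (f : Fin n → ℕ) : ℕ := ∑ i, f i


/-- Extend a tuple `Fin n → ℕ` by zero to all of `ℕ`. -/
def pad {n : ℕ} (f : Fin n → ℕ) : ℕ → ℕ := fun k => if h : k < n then f ⟨k, h⟩ else 0

/-- `Ω(α)`: the smallest set of tuples containing `α` and closed under the
elementary raising moves `(β_i, β_{i+1}) ↦ (β_i - 1, β_{i+1} + 1)` whenever
`β_i = β_{i+1} + 2`. -/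
inductive Omega : {k : ℕ} → (Fin k → ℕ) → (Fin k → ℕ) → Prop
  | base {k : ℕ} (α : Fin k → ℕ) : Omega α α
  | step {k : ℕ} (α β : Fin k → ℕ) (i : ℕ) (hi : i + 1 < k) (hb : Omega α β)
      (h2 : β ⟨i, by omega⟩ = β ⟨i + 1, hi⟩ + 2) :
      Omega α (Function.update (Function.update β ⟨i, by omega⟩ (β ⟨i, by omega⟩ - 1))
        ⟨i + 1, hi⟩ (β ⟨i + 1, hi⟩ + 1))

/-- `l(β) = Σ_{i=1}^{k-1} ((α_1 + ⋯ + α_i) - (β_1 + ⋯ + β_i))`. -/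
def ell {k : ℕ} (α β : Fin k → ℕ) : ℤ :=
  ∑ i ∈ Finset.range (k - 1),
    ((∑ j ∈ Finset.range (i + 1), (pad α j : ℤ)) - ∑ j ∈ Finset.range (i + 1), (pad β j : ℤ))

lemma subF_algebraMap (g : Fin 2 ⊕ ℕ → Fin 2 ⊕ ℕ) (hg : Function.Injective g) (p : Rr) :
    subF g hg (algebraMap Rr F p) = algebraMap Rr F (rename g p) := by
  unfold subF
  rw [IsFractionRing.lift_algebraMap]
  rfl

lemma subF_congr {g g' : Fin 2 ⊕ ℕ → Fin 2 ⊕ ℕ} (hg : Function.Injective g)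
    (hg' : Function.Injective g') (h : g = g') : subF g hg = subF g' hg' := by
  subst h; rfl

lemma subF_comp (g h : Fin 2 ⊕ ℕ → Fin 2 ⊕ ℕ) (hg : Function.Injective g)
    (hh : Function.Injective h) :
    (subF g hg).comp (subF h hh) = subF (g ∘ h) (hg.comp hh) := by
  apply IsLocalization.ringHom_ext (nonZeroDivisors Rr)
  refine RingHom.ext fun p => ?_
  simp only [RingHom.comp_apply, subF_algebraMap, rename_rename]

lemma pact_mul (n : ℕ) (σ τ : Equiv.Perm (Fin n)) :
    pact n (σ * τ) = (pact n σ).comp (pact n τ) := by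
  unfold pact
  rw [subF_comp]
  apply subF_congr
  funext k
  cases k with
  | inl v => rfl
  | inr v =>
    simp only [Function.comp, Sum.map, Sum.elim_inr, Function.comp_apply, Sum.inr.injEq]
    unfold permNat
    by_cases h1 : v < n
    · rw [dif_pos h1, dif_pos h1, dif_pos (τ ⟨v, h1⟩).isLt]
      rfl
    · rw [dif_neg h1, dif_neg h1, dif_neg h1]

lemma pact_x (n : ℕ) (σ : Equiv.Perm (Fin n)) (k : Fin n) :
    pact n σ (x k.val) = x (σ k).val := by
  unfold pact x
  rw [subF_algebraMap, rename_X]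
  simp [permNat, k.isLt]

lemma pact_t (n : ℕ) (σ : Equiv.Perm (Fin n)) : pact n σ t = t := by
  unfold pact t
  rw [subF_algebraMap, rename_X]
  rfl

lemma alg_ne_zero (p : Rr) (v : (Fin 2 ⊕ ℕ) → ℚ) (h : eval v p ≠ 0) :
    algebraMap Rr F p ≠ 0 := by
  intro h0
  apply h
  have : p = 0 := by
    apply IsFractionRing.injective Rr F
    rw [h0, map_zero]
  rw [this, map_zero]

lemma x_ne_zero (k : ℕ) : x k ≠ 0 := by
  apply alg_ne_zero _ (fun v => if v = Sum.inr k then 1 else 0)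
  simp

lemma x_sub_x_ne_zero {i j : ℕ} (h : i ≠ j) : x i - x j ≠ 0 := by
  unfold x
  rw [← map_sub]
  apply alg_ne_zero _ (fun v => if v = Sum.inr i then 1 else 0)
  simp [h, Sum.inr.injEq, (Ne.symm h)]

lemma x_sub_tx_ne_zero (i j : ℕ) : x i - t * x j ≠ 0 := by
  unfold x t
  rw [← map_mul, ← map_sub]
  apply alg_ne_zero _ (fun v => if v = Sum.inr i then 1 else 0)
  simp

lemma t_ne_zero : t ≠ 0 := by
  apply alg_ne_zero _ (fun v => 1)
  simp

/-- The set of ordered pairs `i < j`. -/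
def PS (n : ℕ) : Finset (Fin n × Fin n) := Finset.univ.filter fun p => p.1 < p.2

lemma Ioi_eq_filter {n : ℕ} (i : Fin n) : Finset.Ioi i = Finset.univ.filter (fun j => i < j) := by
  ext j; simp

lemma prodIoi_eq (n : ℕ) (f : Fin n → Fin n → F) :
    ∏ i : Fin n, ∏ j ∈ Finset.Ioi i, f i j = ∏ p ∈ PS n, f p.1 p.2 := by
  rw [PS, Finset.prod_filter, Fintype.prod_prod_type]
  refine Finset.prod_congr rfl fun i _ => ?_
  rw [Ioi_eq_filter, Finset.prod_filter]

set_option maxRecDepth 10000 in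
lemma swap_mem_PS {n : ℕ} (a b : Fin n) (hab : (a : ℕ) + 1 = (b : ℕ))
    (p : Fin n × Fin n) (hp : p ∈ (PS n).erase (a, b)) :
    ((Equiv.swap a b) p.1, (Equiv.swap a b) p.2) ∈ (PS n).erase (a, b) := by
  obtain ⟨u, v⟩ := p
  simp only [PS, Finset.mem_erase, Finset.mem_filter, Finset.mem_univ, true_and, Ne,
    Prod.mk.injEq, not_and] at hp ⊢
  obtain ⟨hne, huv⟩ := hp
  rw [Equiv.swap_apply_def, Equiv.swap_apply_def]
  split_ifs with e1 e2 e3 e4 e5 e6 e7 e8 <;>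
    simp only [Fin.lt_def, Fin.ext_iff, not_and] at * <;> omega

lemma ab_mem_PS {n : ℕ} (a b : Fin n) (hab : (a : ℕ) + 1 = (b : ℕ)) : (a, b) ∈ PS n := by
  rw [PS, Finset.mem_filter]
  exact ⟨Finset.mem_univ _, show a < b by rw [Fin.lt_def]; omega⟩

lemma swap_prod_PS {n : ℕ} (a b : Fin n) (hab : (a : ℕ) + 1 = (b : ℕ)) (g : Fin n → Fin n → F) :
    (∏ p ∈ PS n, g ((Equiv.swap a b) p.1) ((Equiv.swap a b) p.2)) * g a b
      = (∏ p ∈ PS n, g p.1 p.2) * g b a := by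
  have h1 := Finset.mul_prod_erase (PS n)
    (fun p => g ((Equiv.swap a b) p.1) ((Equiv.swap a b) p.2)) (ab_mem_PS a b hab)
  have h2 := Finset.mul_prod_erase (PS n) (fun p => g p.1 p.2) (ab_mem_PS a b hab)
  have h3 : (∏ p ∈ (PS n).erase (a, b), g ((Equiv.swap a b) p.1) ((Equiv.swap a b) p.2))
      = ∏ p ∈ (PS n).erase (a, b), g p.1 p.2 := by
    refine Finset.prod_equiv ((Equiv.swap a b).prodCongr (Equiv.swap a b)) ?_ ?_
    · intro p
      constructor
      · intro hp; exact swap_mem_PS a b hab p hp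
      · intro hp
        have := swap_mem_PS a b hab _ hp
        simpa using this
    · intro p _; rfl
  simp only at h1 h2
  rw [← h1, ← h2, h3, Equiv.swap_apply_left, Equiv.swap_apply_right]
  ring

lemma pact_monomial {n : ℕ} (μ : Fin n → ℕ) (s : Equiv.Perm (Fin n)) :
    pact n s (∏ i : Fin n, x i.val ^ μ i) = ∏ i : Fin n, x i.val ^ μ (s.symm i) := by
  rw [map_prod]
  simp_rw [map_pow, pact_x]
  calc ∏ i : Fin n, x (s i).val ^ μ i
      = ∏ i : Fin n, (fun k : Fin n => x k.val ^ μ (s.symm k)) (s i) := by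
        refine Finset.prod_congr rfl fun i _ => ?_
        simp
    _ = ∏ i : Fin n, x i.val ^ μ (s.symm i) :=
        Equiv.prod_comp s (fun k : Fin n => x k.val ^ μ (s.symm k))

lemma mono_rel {n : ℕ} (μ : Fin n → ℕ) (a b : Fin n) (hab : (a : ℕ) + 1 = (b : ℕ))
    (hm : μ a = μ b + 1) :
    (∏ i : Fin n, x i.val ^ (μ ∘ Equiv.swap a b) i) * x a.val
      = (∏ i : Fin n, x i.val ^ μ i) * x b.val := by
  have hne : a ≠ b := by intro h; rw [h] at hab; omega
  have hb : b ∈ Finset.univ.erase a := Finset.mem_erase.mpr ⟨hne.symm, Finset.mem_univ b⟩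
  have split : ∀ κ : Fin n → ℕ, (∏ i : Fin n, x i.val ^ κ i)
      = x a.val ^ κ a * (x b.val ^ κ b * ∏ i ∈ (Finset.univ.erase a).erase b, x i.val ^ κ i) := by
    intro κ
    rw [← Finset.mul_prod_erase _ _ (Finset.mem_univ a), ← Finset.mul_prod_erase _ _ hb]
  rw [split, split]
  have e1 : (μ ∘ Equiv.swap a b) a = μ b := by simp
  have e2 : (μ ∘ Equiv.swap a b) b = μ a := by simp
  have e3 : ∏ i ∈ (Finset.univ.erase a).erase b, x i.val ^ (μ ∘ Equiv.swap a b) i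
      = ∏ i ∈ (Finset.univ.erase a).erase b, x i.val ^ μ i := by
    refine Finset.prod_congr rfl fun i hi => ?_
    simp only [Finset.mem_erase] at hi
    have : Equiv.swap a b i = i := Equiv.swap_apply_of_ne_of_ne hi.2.1 hi.1
    simp [Function.comp, this]
  rw [e1, e2, e3, hm]
  ring

lemma key_identity {n : ℕ} (μ : Fin n → ℕ) (a b : Fin n) (hab : (a : ℕ) + 1 = (b : ℕ))
    (hm : μ a = μ b + 1) :
    (∏ i : Fin n, x i.val ^ (μ ∘ Equiv.swap a b) i) *
        (∏ i : Fin n, ∏ j ∈ Finset.Ioi i, (x i.val - t * x j.val) / (x i.val - x j.val))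
      + pact n (Equiv.swap a b) ((∏ i : Fin n, x i.val ^ (μ ∘ Equiv.swap a b) i) *
          (∏ i : Fin n, ∏ j ∈ Finset.Ioi i, (x i.val - t * x j.val) / (x i.val - x j.val)))
    = t * ((∏ i : Fin n, x i.val ^ μ i) *
        (∏ i : Fin n, ∏ j ∈ Finset.Ioi i, (x i.val - t * x j.val) / (x i.val - x j.val))
      + pact n (Equiv.swap a b) ((∏ i : Fin n, x i.val ^ μ i) *
          (∏ i : Fin n, ∏ j ∈ Finset.Ioi i, (x i.val - t * x j.val) / (x i.val - x j.val)))) := by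
  have hne : a ≠ b := by intro h; rw [h] at hab; omega
  have hnev : (a : ℕ) ≠ (b : ℕ) := by omega
  set s := Equiv.swap a b with hs
  set ν : Fin n → ℕ := μ ∘ s with hν
  set G : F := ∏ i : Fin n, ∏ j ∈ Finset.Ioi i, (x i.val - t * x j.val) / (x i.val - x j.val)
    with hG
  set Dq : F := ∏ p ∈ PS n, (x p.1.val - t * x p.2.val) with hDq
  set De : F := ∏ p ∈ PS n, (x p.1.val - x p.2.val) with hDe
  have hGq : G = Dq / De := by
    rw [hG, prodIoi_eq n (fun i j => (x i.val - t * x j.val) / (x i.val - x j.val)),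
      Finset.prod_div_distrib]
  -- monomials
  set Mμ : F := ∏ i : Fin n, x i.val ^ μ i with hMμ
  set Mν : F := ∏ i : Fin n, x i.val ^ ν i with hMν
  have hsymm : s.symm = s := by rw [hs]; exact Equiv.symm_swap a b
  have hνs : ∀ i, ν (s i) = μ i := by
    intro i; simp [hν, hs, Function.comp, Equiv.swap_apply_self]
  have pMμ : pact n s Mμ = Mν := by
    rw [hMμ, pact_monomial, hsymm]; rfl
  have pMν : pact n s Mν = Mμ := by
    rw [hMν, pact_monomial, hsymm]
    exact Finset.prod_congr rfl fun i _ => by rw [hνs]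
  -- swapped products
  have pDq : pact n s Dq = ∏ p ∈ PS n, (x (s p.1).val - t * x (s p.2).val) := by
    rw [hDq, map_prod]
    refine Finset.prod_congr rfl fun p _ => ?_
    rw [map_sub, map_mul, pact_t, pact_x, pact_x]
  have pDe : pact n s De = ∏ p ∈ PS n, (x (s p.1).val - x (s p.2).val) := by
    rw [hDe, map_prod]
    refine Finset.prod_congr rfl fun p _ => ?_
    rw [map_sub, pact_x, pact_x]
  have h2 : pact n s Dq * (x a.val - t * x b.val) = Dq * (x b.val - t * x a.val) := by
    rw [pDq]
    have := swap_prod_PS a b hab (fun i j => x i.val - t * x j.val)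
    simpa using this
  have h3 : pact n s De * (x a.val - x b.val) = De * (x b.val - x a.val) := by
    rw [pDe]
    have := swap_prod_PS a b hab (fun i j => x i.val - x j.val)
    simpa using this
  -- nonvanishing
  have hA : x a.val ≠ 0 := x_ne_zero _
  have hAB : x a.val - x b.val ≠ 0 := x_sub_x_ne_zero (by omega)
  have hAtB : x a.val - t * x b.val ≠ 0 := x_sub_tx_ne_zero _ _
  have hDe0 : De ≠ 0 := by
    rw [hDe]
    refine Finset.prod_ne_zero_iff.mpr fun p hp => ?_
    have : p.1 ≠ p.2 := by
      rw [PS, Finset.mem_filter] at hp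
      exact ne_of_lt hp.2
    exact x_sub_x_ne_zero (fun h => this (Fin.val_injective h))
  have hEs : pact n s De = -De := by
    have : pact n s De * (x a.val - x b.val) = (-De) * (x a.val - x b.val) := by
      rw [h3]; ring
    exact mul_right_cancel₀ hAB this
  have hQs : pact n s Dq = Dq * (x b.val - t * x a.val) / (x a.val - t * x b.val) := by
    rw [eq_div_iff hAtB, h2]
  have h1 : Mν * x a.val = Mμ * x b.val := mono_rel μ a b hab hm
  have hMν' : Mν = Mμ * x b.val / x a.val := by
    rw [eq_div_iff hA, h1]
  -- the final computation
  rw [map_mul, map_mul, pMμ, pMν, hGq, map_div₀, hEs, hQs, hMν']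
  field_simp
  have hw : (x a.val - t * x b.val) * (x a.val - t * x b.val)⁻¹ = 1 := mul_inv_cancel₀ hAtB
  linear_combination (Mμ * Dq * (x a.val * t - x b.val)) * hw

lemma HL_swap {n : ℕ} (μ : Fin n → ℕ) (a b : Fin n) (hab : (a : ℕ) + 1 = (b : ℕ))
    (hm : μ a = μ b + 1) :
    HL n (μ ∘ Equiv.swap a b) = t * HL n μ := by
  set s := Equiv.swap a b with hs
  set G : F := ∏ i : Fin n, ∏ j ∈ Finset.Ioi i, (x i.val - t * x j.val) / (x i.val - x j.val)
    with hG
  set Pν : F := (∏ i : Fin n, x i.val ^ (μ ∘ s) i) * G with hPν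
  set Pμ : F := (∏ i : Fin n, x i.val ^ μ i) * G with hPμ
  have reidx : ∀ Z : F, ∑ σ : Equiv.Perm (Fin n), pact n σ (pact n s Z)
      = ∑ σ : Equiv.Perm (Fin n), pact n σ Z := by
    intro Z
    calc ∑ σ : Equiv.Perm (Fin n), pact n σ (pact n s Z)
        = ∑ σ : Equiv.Perm (Fin n), pact n (σ * s) Z := by
          refine Finset.sum_congr rfl fun σ _ => ?_
          rw [pact_mul]; rfl
      _ = ∑ σ : Equiv.Perm (Fin n), pact n σ Z := by
          have h := Equiv.sum_comp (Equiv.mulRight s)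
            (fun σ : Equiv.Perm (Fin n) => pact n σ Z)
          simpa using h
  have key := key_identity μ a b hab hm
  have main : ∀ σ : Equiv.Perm (Fin n), pact n σ Pν + pact n σ (pact n s Pν)
      = t * (pact n σ Pμ + pact n σ (pact n s Pμ)) := by
    intro σ
    rw [← map_add, ← map_add, hPν, hPμ, hG]
    rw [key]
    rw [map_mul, pact_t]
  have big : HL n (μ ∘ s) + HL n (μ ∘ s) = t * (HL n μ + HL n μ) := by
    unfold HL
    calc (∑ σ : Equiv.Perm (Fin n), pact n σ Pν) + ∑ σ : Equiv.Perm (Fin n), pact n σ Pν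
        = (∑ σ : Equiv.Perm (Fin n), pact n σ Pν)
            + ∑ σ : Equiv.Perm (Fin n), pact n σ (pact n s Pν) := by rw [reidx]
      _ = ∑ σ : Equiv.Perm (Fin n), (pact n σ Pν + pact n σ (pact n s Pν)) := by
          rw [Finset.sum_add_distrib]
      _ = ∑ σ : Equiv.Perm (Fin n), t * (pact n σ Pμ + pact n σ (pact n s Pμ)) := by
          exact Finset.sum_congr rfl fun σ _ => main σ
      _ = t * ∑ σ : Equiv.Perm (Fin n), (pact n σ Pμ + pact n σ (pact n s Pμ)) := by
          rw [Finset.mul_sum]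
      _ = t * ((∑ σ : Equiv.Perm (Fin n), pact n σ Pμ)
            + ∑ σ : Equiv.Perm (Fin n), pact n σ (pact n s Pμ)) := by
          rw [Finset.sum_add_distrib]
      _ = t * ((∑ σ : Equiv.Perm (Fin n), pact n σ Pμ)
            + ∑ σ : Equiv.Perm (Fin n), pact n σ Pμ) := by rw [reidx]
  have h2 : (2 : F) ≠ 0 := by
    have := alg_ne_zero 2 (fun _ => 0) (by simp [map_ofNat])
    simpa [map_ofNat] using this
  have : (2 : F) * HL n (μ ∘ s) = 2 * (t * HL n μ) := by linear_combination big
  exact mul_left_cancel₀ h2 this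

lemma ell_step {n : ℕ} (α β : Fin n → ℕ) (i : ℕ) (hi : i + 1 < n)
    (h2 : β ⟨i, by omega⟩ = β ⟨i + 1, hi⟩ + 2) :
    ell α (Function.update (Function.update β ⟨i, by omega⟩ (β ⟨i, by omega⟩ - 1))
        ⟨i + 1, hi⟩ (β ⟨i + 1, hi⟩ + 1)) = ell α β + 1 := by
  set β' := Function.update (Function.update β ⟨i, by omega⟩ (β ⟨i, by omega⟩ - 1))
      ⟨i + 1, hi⟩ (β ⟨i + 1, hi⟩ + 1) with hβ'
  have vI : ∀ h : i < n, β' ⟨i, h⟩ = β ⟨i, h⟩ - 1 := by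
    intro h
    rw [hβ', Function.update_apply, if_neg (by simp [Fin.ext_iff]),
      Function.update_apply, if_pos rfl]
  have vJ : β' ⟨i + 1, hi⟩ = β ⟨i + 1, hi⟩ + 1 := by
    rw [hβ', Function.update_apply, if_pos rfl]
  have vO : ∀ j : Fin n, j.val ≠ i → j.val ≠ i + 1 → β' j = β j := by
    intro j hj1 hj2
    rw [hβ', Function.update_apply, if_neg (by simp [Fin.ext_iff]; omega),
      Function.update_apply, if_neg (by simp [Fin.ext_iff]; omega)]
  have padd : ∀ j : ℕ, (pad β' j : ℤ)
      = (pad β j : ℤ) + ((if j = i then (-1 : ℤ) else 0) + (if j = i + 1 then (1 : ℤ) else 0)) := by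
    intro j
    unfold pad
    by_cases hj : j < n
    · rw [dif_pos hj, dif_pos hj]
      rcases eq_or_ne j i with rfl | hji
      · rw [vI hj, if_pos rfl, if_neg (by omega)]
        have e2 : β ⟨j, hj⟩ = β ⟨j + 1, hi⟩ + 2 := h2
        omega
      · rcases eq_or_ne j (i + 1) with rfl | hji1
        · have e3 : β' ⟨i + 1, hj⟩ = β ⟨i + 1, hj⟩ + 1 := vJ
          rw [e3, if_neg hji, if_pos rfl]
          omega
        · rw [vO ⟨j, hj⟩ hji hji1, if_neg hji, if_neg hji1]
          omega
    · rw [dif_neg hj, dif_neg hj, if_neg (by omega), if_neg (by omega)]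
      norm_num
  have inner : ∀ m : ℕ, ∑ j ∈ Finset.range (m + 1), (pad β' j : ℤ)
      = (∑ j ∈ Finset.range (m + 1), (pad β j : ℤ))
        + ((if i < m + 1 then (-1 : ℤ) else 0) + (if i + 1 < m + 1 then (1 : ℤ) else 0)) := by
    intro m
    simp_rw [padd]
    rw [Finset.sum_add_distrib, Finset.sum_add_distrib,
      Finset.sum_ite_eq' (Finset.range (m + 1)) i (fun _ => (-1 : ℤ)),
      Finset.sum_ite_eq' (Finset.range (m + 1)) (i + 1) (fun _ => (1 : ℤ))]
    simp [Finset.mem_range]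
  have main : ell α β' = ell α β
      - ∑ m ∈ Finset.range (n - 1),
          ((if i < m + 1 then (-1 : ℤ) else 0) + (if i + 1 < m + 1 then (1 : ℤ) else 0)) := by
    unfold ell
    rw [← Finset.sum_sub_distrib]
    refine Finset.sum_congr rfl fun m _ => ?_
    rw [inner m]
    ring
  have cnt : ∑ m ∈ Finset.range (n - 1),
      ((if i < m + 1 then (-1 : ℤ) else 0) + (if i + 1 < m + 1 then (1 : ℤ) else 0)) = -1 := by
    have pw : ∀ m ∈ Finset.range (n - 1),
        ((if i < m + 1 then (-1 : ℤ) else 0) + (if i + 1 < m + 1 then (1 : ℤ) else 0))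
          = (if m = i then (-1 : ℤ) else 0) := by
      intro m hm
      split_ifs <;> omega
    rw [Finset.sum_congr rfl pw, Finset.sum_ite_eq' (Finset.range (n - 1)) i (fun _ => (-1 : ℤ)),
      if_pos (Finset.mem_range.mpr (by omega))]
  rw [main, cnt]
  ring

lemma omega_aux {k : ℕ} (α β : Fin k → ℕ) (hΩ : Omega α β) :
    ∀ lam : Fin k → ℕ, α = (fun i => lam i + rho k i) →
      (∀ i : Fin k, rho k i ≤ β i) ∧
        HL k (fun i => β i - rho k i) = t ^ ell α β * HL k lam := by
  induction hΩ with
  | base =>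
    intro lam hα
    subst hα
    refine ⟨fun i => Nat.le_add_left _ _, ?_⟩
    have e1 : (fun i => lam i + rho k i - rho k i) = lam := funext fun i => by omega
    have e2 : ell (fun i => lam i + rho k i) (fun i => lam i + rho k i) = 0 := by
      unfold ell; simp
    rw [e1, e2, zpow_zero, one_mul]
  | step βx i hi hb h2 ih =>
    intro lam hα
    obtain ⟨ihpos, ihHL⟩ := ih lam hα
    set a : Fin k := ⟨i, by omega⟩ with ha
    set b : Fin k := ⟨i + 1, hi⟩ with hb'
    set βn := Function.update (Function.update βx a (βx a - 1)) b (βx b + 1) with hβn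
    have vI : βn a = βx a - 1 := by
      rw [hβn, Function.update_apply, if_neg (by simp [ha, hb', Fin.ext_iff]),
        Function.update_apply, if_pos rfl]
    have vJ : βn b = βx b + 1 := by
      rw [hβn, Function.update_apply, if_pos rfl]
    have vO : ∀ j : Fin k, j ≠ a → j ≠ b → βn j = βx j := by
      intro j hj1 hj2
      rw [hβn, Function.update_apply, if_neg hj2, Function.update_apply, if_neg hj1]
    have hrho : rho k a = rho k b + 1 := by
      simp only [rho, ha, hb']
      omega
    have hpos : ∀ j : Fin k, rho k j ≤ βn j := by
      intro j
      rcases eq_or_ne j a with rfl | hja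
      · rw [vI]
        have := ihpos b
        rw [hrho]
        omega
      · rcases eq_or_ne j b with rfl | hjb
        · rw [vJ]
          have := ihpos b
          omega
        · rw [vO j hja hjb]
          exact ihpos j
    refine ⟨hpos, ?_⟩
    have habv : (a : ℕ) + 1 = (b : ℕ) := rfl
    have hm : (fun j => βx j - rho k j) a = (fun j => βx j - rho k j) b + 1 := by
      simp only
      have := ihpos b
      omega
    have hμ : (fun j => βn j - rho k j) = (fun j => βx j - rho k j) ∘ Equiv.swap a b := by
      funext j
      rcases eq_or_ne j a with rfl | hja
      · simp only [Function.comp, Equiv.swap_apply_left, vI]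
        have := ihpos b
        rw [hrho]
        omega
      · rcases eq_or_ne j b with rfl | hjb
        · simp only [Function.comp, Equiv.swap_apply_right, vJ]
          have := ihpos b
          rw [hrho]
          omega
        · simp only [Function.comp, Equiv.swap_apply_of_ne_of_ne hja hjb, vO j hja hjb]
    have hell : ell α βn = ell α βx + 1 := ell_step α βx i hi h2
    rw [hμ, HL_swap _ a b habv hm, ihHL, hell, zpow_add₀ t_ne_zero, zpow_one]
    ring


/-- **Proposition 5 (raising operators).** If `λ` is weakly decreasing of length `n`,
`α = λ + ρ_n` and `β ∈ Ω(α)`, then every entry of `β - ρ_n` is a nonnegative integer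
and `P_{β-ρ_n}(x;t) = t^{l(β)} ⬝ P_λ(x;t)`. -/
theorem raising_operator_identity (n : ℕ) (lam : Fin n → ℕ)
    (hlam : ∀ i j : Fin n, i ≤ j → lam j ≤ lam i)
    (β : Fin n → ℕ) (hβ : Omega (fun i => lam i + rho n i) β) :
    (∀ i : Fin n, rho n i ≤ β i) ∧
      HL n (fun i => β i - rho n i) =
        t ^ ell (fun i => lam i + rho n i) β * HL n lam := by
  exact omega_aux _ β hβ lam rfl

end
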